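/- arXiv:2407.17923 — 3 statements merged into one kernel-verified Lean document; each statement's English description precedes it below -/
import Mathlib

section
/- For a Hilbert space V, 0 < γ < δ, and a weight μ : (0,∞) → [0,∞) that is continuous, integrable, and satisfies μ(s) ≤ μ(1)e^{-δ(s-1)} for s ≥ 1, the map J defined by (Jφ)(s) = ∫_{-s}^0 φ(r) dr is a bounded linear operator from the weighted space L²_V = {φ : (-∞,0] → V measurable : ∫_{-∞}^0 e^{γs} ‖φ(s)‖² ds < ∞} into L²_μ((0,∞); V) = {η : (0,∞) → V : ∫_0^∞ μ(s)‖η(s)‖² ds < ∞}. In particular there is a constant K_μ = e^{γ}∫_0^1 μ(s)ds + μ(1)e^{δ}(δ-γ)^{-2} such that ∫_0^∞ μ(s)‖(Jφ)(s)‖² ds ≤ K_μ ∫_{-∞}^0 e^{γs}‖φ(s)‖² ds. -/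
open Real MeasureTheory Filter

theorem stmt_5 {V : Type*} [NormedAddCommGroup V] [InnerProductSpace ℝ V]
    [CompleteSpace V]
    (δ γ : ℝ) (hγ : 0 < γ) (hγδ : γ < δ)
    (μ : ℝ → ℝ) (hμpos : ∀ s > (0:ℝ), 0 ≤ μ s)
    (hμcont : ContinuousOn μ (Set.Ioi 0))
    (hμint : IntegrableOn μ (Set.Ioi 0))
    (hμdecay : ∀ s ≥ (1:ℝ), μ s ≤ μ 1 * Real.exp (-δ * (s - 1)))
    (φ : ℝ → V) (hφmeas : AEStronglyMeasurable φ (volume.restrict (Set.Iic 0)))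
    (hφ : IntegrableOn (fun s => Real.exp (γ * s) * ‖φ s‖ ^ 2) (Set.Iic 0))
    (J : (ℝ → V) → ℝ → V)
    (hJ : ∀ ψ s, J ψ s = ∫ r in Set.Icc (-s) 0, ψ r) :
    IntegrableOn (fun s => μ s * ‖J φ s‖ ^ 2) (Set.Ioi 0) ∧
    ∫ s in Set.Ioi (0:ℝ), μ s * ‖J φ s‖ ^ 2 ≤
      (Real.exp γ * (∫ s in Set.Ioc (0:ℝ) 1, μ s) + μ 1 * Real.exp δ * (δ - γ)⁻¹ ^ 2) *
        ∫ s in Set.Iic (0:ℝ), Real.exp (γ * s) * ‖φ s‖ ^ 2 := by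
  set Φ : ℝ := ∫ r in Set.Iic (0:ℝ), Real.exp (γ * r) * ‖φ r‖ ^ 2 with hΦdef
  have hΦ0 : 0 ≤ Φ := setIntegral_nonneg measurableSet_Iic fun x _ => by positivity
  have hμ1 : 0 ≤ μ 1 := hμpos 1 one_pos
  -- local integrability of φ
  have hloc : ∀ a : ℝ, IntegrableOn φ (Set.Icc a 0) := by
    intro a
    have hsub : Set.Icc a (0:ℝ) ⊆ Set.Iic 0 := Set.Icc_subset_Iic_self
    have hw : IntegrableOn (fun s => Real.exp (γ * s) * ‖φ s‖ ^ 2) (Set.Icc a 0) :=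
      hφ.mono_set hsub
    have hmeas : AEStronglyMeasurable φ (volume.restrict (Set.Icc a 0)) :=
      hφmeas.mono_measure (Measure.restrict_mono hsub le_rfl)
    have hbound : IntegrableOn
        (fun s => 1 + Real.exp (-(γ * a)) * (Real.exp (γ * s) * ‖φ s‖ ^ 2)) (Set.Icc a 0) :=
      (integrableOn_const measure_Icc_lt_top.ne).add (hw.const_mul _)
    refine hbound.mono' hmeas ?_
    filter_upwards [ae_restrict_mem measurableSet_Icc] with r hr
    have h1 : ‖φ r‖ ≤ 1 + ‖φ r‖ ^ 2 := by nlinarith [norm_nonneg (φ r)]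
    have h2 : ‖φ r‖ ^ 2 = Real.exp (-(γ * r)) * (Real.exp (γ * r) * ‖φ r‖ ^ 2) := by
      rw [← mul_assoc, ← Real.exp_add]; simp
    have h3 : Real.exp (-(γ * r)) ≤ Real.exp (-(γ * a)) :=
      Real.exp_le_exp.2 (by nlinarith [hr.1])
    have h4 : 0 ≤ Real.exp (γ * r) * ‖φ r‖ ^ 2 := by positivity
    calc ‖φ r‖ ≤ 1 + ‖φ r‖ ^ 2 := h1
      _ ≤ 1 + Real.exp (-(γ * a)) * (Real.exp (γ * r) * ‖φ r‖ ^ 2) := by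
          nlinarith [mul_le_mul_of_nonneg_right h3 h4]
  -- the indicator extension and continuity of the primitive
  set ψ : ℝ → V := (Set.Iic (0:ℝ)).indicator φ with hψdef
  have hψint : ∀ a b : ℝ, IntervalIntegrable ψ volume a b := by
    intro a b
    rw [intervalIntegrable_iff]
    have hu : IntegrableOn ψ (Set.Icc (min a b) 0 ∪ Set.Ioi 0) := by
      apply IntegrableOn.union
      · exact (hloc (min a b)).congr_fun
          (fun x hx => (Set.indicator_of_mem (show x ∈ Set.Iic (0:ℝ) from hx.2) φ).symm)
          measurableSet_Icc
      · exact (integrableOn_zero).congr_fun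
          (fun x hx => (Set.indicator_of_notMem (by simpa using hx) φ).symm)
          measurableSet_Ioi
    refine hu.mono_set fun x hx => ?_
    rcases le_or_gt x 0 with h | h
    · exact Or.inl ⟨le_of_lt (by simpa using hx.1), h⟩
    · exact Or.inr h
  have hFcont : Continuous (fun s : ℝ => ∫ r in (-s)..0, ψ r) := by
    have h := intervalIntegral.continuous_primitive hψint 0
    have heq : (fun s : ℝ => ∫ r in (-s)..0, ψ r)
        = fun s : ℝ => -∫ r in (0:ℝ)..(-s), ψ r := by
      funext s; rw [← intervalIntegral.integral_symm]
    rw [heq]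
    exact (h.comp continuous_neg).neg
  have hJF : ∀ s ∈ Set.Ioi (0:ℝ), J φ s = ∫ r in (-s)..0, ψ r := by
    intro s hs
    have hs0 : (0:ℝ) < s := hs
    rw [hJ]
    have h1 : ∫ r in Set.Icc (-s) 0, ψ r = ∫ r in Set.Icc (-s) 0, φ r := by
      rw [hψdef, setIntegral_indicator measurableSet_Iic,
        Set.inter_eq_self_of_subset_left Set.Icc_subset_Iic_self]
    rw [← h1, MeasureTheory.integral_Icc_eq_integral_Ioc,
      ← intervalIntegral.integral_of_le (by linarith : -s ≤ (0:ℝ))]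
  -- key pointwise Cauchy–Schwarz estimate
  have key : ∀ s ∈ Set.Ioi (0:ℝ), ‖J φ s‖ ^ 2 ≤ s * Real.exp (γ * s) * Φ := by
    intro s hs
    have hs0 : (0:ℝ) < s := hs
    set c : Set ℝ := Set.Icc (-s) 0 with hc
    have hcm : MeasurableSet c := measurableSet_Icc
    have hcsub : c ⊆ Set.Iic 0 := Set.Icc_subset_Iic_self
    set f : ℝ → ℝ := fun r => Real.exp (-(γ * r) / 2) with hf
    set g : ℝ → ℝ := fun r => Real.exp (γ * r / 2) * ‖φ r‖ with hg
    have hfc : Continuous f := by fun_prop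
    have hA : IntegrableOn (fun r => Real.exp (-(γ * r))) c :=
      (Continuous.integrableOn_Icc (by fun_prop))
    have hB : IntegrableOn (fun r => Real.exp (γ * r) * ‖φ r‖ ^ 2) c := hφ.mono_set hcsub
    have hgm : AEStronglyMeasurable g (volume.restrict c) :=
      (Continuous.aestronglyMeasurable (by fun_prop)).mul
        (hφmeas.mono_measure (Measure.restrict_mono hcsub le_rfl)).norm
    have hfsq : ∀ r, f r ^ 2 = Real.exp (-(γ * r)) := by
      intro r; rw [sq, ← Real.exp_add]; ring_nf
    have hgsq : ∀ r, g r ^ 2 = Real.exp (γ * r) * ‖φ r‖ ^ 2 := by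
      intro r; rw [mul_pow, sq (Real.exp _), ← Real.exp_add]; ring_nf
    have hf2 : MemLp f (ENNReal.ofReal 2) (volume.restrict c) := by
      rw [show ENNReal.ofReal 2 = 2 by simp]
      exact (memLp_two_iff_integrable_sq hfc.aestronglyMeasurable.restrict).2
        (by simpa only [hfsq] using hA.integrable)
    have hg2 : MemLp g (ENNReal.ofReal 2) (volume.restrict c) := by
      rw [show ENNReal.ofReal 2 = 2 by simp]
      exact (memLp_two_iff_integrable_sq hgm).2 (by simpa only [hgsq] using hB.integrable)
    have hpq : (2:ℝ).HolderConjugate 2 := Real.HolderConjugate.two_two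
    have hCS := integral_mul_le_Lp_mul_Lq_of_nonneg hpq
      (Filter.Eventually.of_forall fun r => (Real.exp_pos _).le)
      (Filter.Eventually.of_forall fun r => mul_nonneg (Real.exp_pos _).le (norm_nonneg _))
      hf2 hg2
    set A : ℝ := ∫ r in c, Real.exp (-(γ * r)) with hAdef
    set B : ℝ := ∫ r in c, Real.exp (γ * r) * ‖φ r‖ ^ 2 with hBdef
    have hA0 : 0 ≤ A := setIntegral_nonneg hcm fun x _ => (Real.exp_pos _).le
    have hB0 : 0 ≤ B := setIntegral_nonneg hcm fun x _ => by positivity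
    have hrpow : ∀ x : ℝ, x ^ (2:ℝ) = x ^ (2:ℕ) := fun x => by
      rw [← Real.rpow_natCast x 2]; norm_num
    have hCS' : ∫ r in c, ‖φ r‖ ≤ A ^ (1/2 : ℝ) * B ^ (1/2 : ℝ) := by
      have e1 : ∫ r in c, f r * g r = ∫ r in c, ‖φ r‖ := by
        refine integral_congr_ae (Filter.Eventually.of_forall fun r => ?_)
        simp only [hf, hg, ← mul_assoc, ← Real.exp_add]
        ring_nf
        rw [Real.exp_zero, one_mul]
      have e2 : ∫ r in c, f r ^ (2:ℝ) = A := by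
        simp only [hrpow, hfsq, hAdef]
      have e3 : ∫ r in c, g r ^ (2:ℝ) = B := by
        simp only [hrpow, hgsq, hBdef]
      calc ∫ r in c, ‖φ r‖ = ∫ r in c, f r * g r := e1.symm
        _ ≤ (∫ r in c, f r ^ (2:ℝ)) ^ (1/(2:ℝ)) * (∫ r in c, g r ^ (2:ℝ)) ^ (1/(2:ℝ)) := hCS
        _ = A ^ (1/2 : ℝ) * B ^ (1/2 : ℝ) := by rw [e2, e3]
    have hnorm : ‖J φ s‖ ≤ ∫ r in c, ‖φ r‖ := by
      rw [hJ]; exact norm_integral_le_integral_norm φ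
    have hsq : ‖J φ s‖ ^ 2 ≤ A * B := by
      have h1 : ‖J φ s‖ ^ 2 ≤ (A ^ (1/2:ℝ) * B ^ (1/2:ℝ)) ^ 2 :=
        pow_le_pow_left₀ (norm_nonneg _) (hnorm.trans hCS') 2
      refine h1.trans_eq ?_
      rw [mul_pow, ← Real.rpow_natCast (A ^ (1/2:ℝ)) 2, ← Real.rpow_natCast (B ^ (1/2:ℝ)) 2,
        ← Real.rpow_mul hA0, ← Real.rpow_mul hB0]
      norm_num
    have hAle : A ≤ s * Real.exp (γ * s) := by
      have h1 : A ≤ ∫ _ in c, Real.exp (γ * s) :=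
        setIntegral_mono_on hA (integrableOn_const measure_Icc_lt_top.ne) hcm
          (fun r hr => Real.exp_le_exp.2 (by nlinarith [hr.1]))
      have h2 : ∫ _ in c, Real.exp (γ * s) = s * Real.exp (γ * s) := by
        rw [setIntegral_const, hc, measureReal_def, Real.volume_Icc, smul_eq_mul]
        congr 1
        rw [show (0:ℝ) - (-s) = s by ring, ENNReal.toReal_ofReal hs0.le]
      linarith
    have hBle : B ≤ Φ :=
      setIntegral_mono_set hφ (Filter.Eventually.of_forall fun r => by positivity)
        (HasSubset.Subset.eventuallyLE hcsub)
    calc ‖J φ s‖ ^ 2 ≤ A * B := hsq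
      _ ≤ (s * Real.exp (γ * s)) * Φ := mul_le_mul hAle hBle hB0 (by positivity)
      _ = s * Real.exp (γ * s) * Φ := by ring
  -- measurability
  have hJmeas : AEStronglyMeasurable (fun s => μ s * ‖J φ s‖ ^ 2)
      (volume.restrict (Set.Ioi 0)) := by
    have h1 : AEStronglyMeasurable μ (volume.restrict (Set.Ioi 0)) :=
      hμcont.aestronglyMeasurable measurableSet_Ioi
    have h2 : AEStronglyMeasurable (fun s : ℝ => ‖(∫ r in (-s)..0, ψ r)‖ ^ 2)
        (volume.restrict (Set.Ioi 0)) := ((hFcont.norm.pow 2).aestronglyMeasurable).restrict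
    refine h1.mul (h2.congr ?_)
    filter_upwards [ae_restrict_mem measurableSet_Ioi] with s hs
    rw [hJF s hs]
  -- integrability on (0,1]
  have hsub01 : Set.Ioc (0:ℝ) 1 ⊆ Set.Ioi 0 := Set.Ioc_subset_Ioi_self
  have hbound01 : ∀ s ∈ Set.Ioc (0:ℝ) 1, μ s * ‖J φ s‖ ^ 2 ≤ μ s * (Real.exp γ * Φ) := by
    intro s hs
    have hμ0 := hμpos s hs.1
    have hk := key s hs.1
    have h2 : s * Real.exp (γ * s) ≤ Real.exp γ := by
      have he : Real.exp (γ * s) ≤ Real.exp γ :=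
        Real.exp_le_exp.2 (by nlinarith [hs.2, hγ.le])
      nlinarith [Real.exp_pos (γ * s), hs.1.le, hs.2]
    have h3 : ‖J φ s‖ ^ 2 ≤ Real.exp γ * Φ := by
      refine hk.trans ?_
      exact mul_le_mul_of_nonneg_right h2 hΦ0
    exact mul_le_mul_of_nonneg_left h3 hμ0
  have hint1 : IntegrableOn (fun s => μ s * ‖J φ s‖ ^ 2) (Set.Ioc 0 1) := by
    have hbd : IntegrableOn (fun s => μ s * (Real.exp γ * Φ)) (Set.Ioc 0 1) :=
      (hμint.mono_set hsub01).mul_const _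
    refine hbd.mono' (hJmeas.mono_measure (Measure.restrict_mono hsub01 le_rfl)) ?_
    filter_upwards [ae_restrict_mem measurableSet_Ioc] with s hs
    have hμ0 := hμpos s hs.1
    rw [Real.norm_of_nonneg (mul_nonneg hμ0 (by positivity))]
    exact hbound01 s hs
  -- the exponential integral on (1,∞)
  set α : ℝ := δ - γ with hαdef
  have hα : 0 < α := by simp [hαdef]; linarith
  set G : ℝ → ℝ := fun s => -((s / α + 1 / α ^ 2) * Real.exp (-(α * s))) with hGdef
  have hG : ∀ x : ℝ, HasDerivAt G (x * Real.exp (-(α * x))) x := by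
    intro x
    have h1 : HasDerivAt (fun s : ℝ => s / α + 1 / α ^ 2) (1 / α) x :=
      ((hasDerivAt_id x).div_const α).add_const _
    have h0 : HasDerivAt (fun s : ℝ => -(α * s)) (-α) x := by
      simpa [Pi.neg_def] using ((hasDerivAt_id x).const_mul α).neg
    have h2 : HasDerivAt (fun s : ℝ => Real.exp (-(α * s))) (-α * Real.exp (-(α * x))) x := by
      simpa [mul_comm] using h0.exp
    have h3 : HasDerivAt (fun s : ℝ => -((s / α + 1 / α ^ 2) * Real.exp (-(α * s)))) _ x :=
      (h1.mul h2).neg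
    convert h3 using 1
    field_simp
    ring
  have hcomp : Tendsto (fun s : ℝ => α * s) atTop atTop :=
    Tendsto.const_mul_atTop hα tendsto_id
  have t1 : Tendsto (fun s : ℝ => (α * s) * Real.exp (-(α * s))) atTop (nhds 0) := by
    have := (tendsto_pow_mul_exp_neg_atTop_nhds_zero 1).comp hcomp
    simpa [Function.comp_def] using this
  have t2 : Tendsto (fun s : ℝ => Real.exp (-(α * s))) atTop (nhds 0) := by
    have hneg : Tendsto (fun s : ℝ => -(α * s)) atTop atBot := tendsto_neg_atBot_iff.2 hcomp
    have h := Real.tendsto_exp_atBot.comp hneg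
    exact h
  have htend : Tendsto G atTop (nhds 0) := by
    have h3 : Tendsto (fun s : ℝ => -((α * s) * Real.exp (-(α * s)) * (1 / α ^ 2)
        + Real.exp (-(α * s)) * (1 / α ^ 2))) atTop (nhds 0) := by
      have := ((t1.mul_const (1 / α ^ 2)).add (t2.mul_const (1 / α ^ 2))).neg
      simpa using this
    refine h3.congr fun s => ?_
    rw [hGdef]
    field_simp
  have hnn : ∀ x ∈ Set.Ioi (1:ℝ), 0 ≤ x * Real.exp (-(α * x)) := by
    intro x hx
    have : (0:ℝ) < x := lt_trans one_pos hx
    positivity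
  have hexpint : IntegrableOn (fun s : ℝ => s * Real.exp (-(α * s))) (Set.Ioi 1) :=
    integrableOn_Ioi_deriv_of_nonneg' (fun x _ => hG x) hnn htend
  have hexpval : ∫ s in Set.Ioi (1:ℝ), s * Real.exp (-(α * s)) ≤ α⁻¹ ^ 2 := by
    have hval : ∫ s in Set.Ioi (1:ℝ), s * Real.exp (-(α * s)) = 0 - G 1 :=
      integral_Ioi_of_hasDerivAt_of_nonneg' (fun x _ => hG x) hnn htend
    rw [hval, hGdef]
    simp only [zero_sub, neg_neg, mul_one]
    have hexp := Real.add_one_le_exp α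
    have he : (0:ℝ) < Real.exp α := Real.exp_pos α
    have heq : (1 / α + 1 / α ^ 2) = (α + 1) / α ^ 2 := by field_simp
    rw [heq, Real.exp_neg, div_mul_eq_mul_div, div_le_iff₀ (by positivity)]
    have h4 : (α + 1) * (Real.exp α)⁻¹ ≤ 1 := by
      rw [← div_eq_mul_inv, div_le_one he]
      linarith
    calc (α + 1) * (Real.exp α)⁻¹ ≤ 1 := h4
      _ ≤ α⁻¹ ^ 2 * α ^ 2 := by
          rw [← mul_pow, inv_mul_cancel₀ (ne_of_gt hα), one_pow]
  -- bound on (1,∞)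
  have hsub1 : Set.Ioi (1:ℝ) ⊆ Set.Ioi 0 := fun x hx => Set.mem_Ioi.2 (lt_trans one_pos hx)
  have hbound1 : ∀ s ∈ Set.Ioi (1:ℝ),
      μ s * ‖J φ s‖ ^ 2 ≤ (μ 1 * Real.exp δ * Φ) * (s * Real.exp (-(α * s))) := by
    intro s hs
    have hs1 : (1:ℝ) ≤ s := le_of_lt hs
    have hs0 : (0:ℝ) < s := lt_trans one_pos hs
    have hk := key s (hsub1 hs)
    have hd := hμdecay s hs1
    have h1 : μ s * ‖J φ s‖ ^ 2 ≤
        (μ 1 * Real.exp (-δ * (s - 1))) * (s * Real.exp (γ * s) * Φ) :=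
      mul_le_mul hd hk (sq_nonneg _) (by positivity)
    refine h1.trans_eq ?_
    have hee : Real.exp (-δ * (s - 1)) * Real.exp (γ * s)
        = Real.exp δ * Real.exp (-(α * s)) := by
      rw [← Real.exp_add, ← Real.exp_add]
      congr 1
      rw [hαdef]; ring
    calc (μ 1 * Real.exp (-δ * (s - 1))) * (s * Real.exp (γ * s) * Φ)
        = (μ 1 * (Real.exp (-δ * (s - 1)) * Real.exp (γ * s))) * (s * Φ) := by ring
      _ = (μ 1 * (Real.exp δ * Real.exp (-(α * s)))) * (s * Φ) := by rw [hee]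
      _ = (μ 1 * Real.exp δ * Φ) * (s * Real.exp (-(α * s))) := by ring
  have hint2 : IntegrableOn (fun s => μ s * ‖J φ s‖ ^ 2) (Set.Ioi 1) := by
    have hbd : IntegrableOn (fun s => (μ 1 * Real.exp δ * Φ) * (s * Real.exp (-(α * s))))
        (Set.Ioi 1) := hexpint.const_mul _
    refine hbd.mono' (hJmeas.mono_measure (Measure.restrict_mono hsub1 le_rfl)) ?_
    filter_upwards [ae_restrict_mem measurableSet_Ioi] with s hs
    have hμ0 := hμpos s (hsub1 hs)
    rw [Real.norm_of_nonneg (mul_nonneg hμ0 (by positivity))]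
    exact hbound1 s hs
  -- combine
  have hsplit : Set.Ioi (0:ℝ) = Set.Ioc 0 1 ∪ Set.Ioi 1 :=
    (Set.Ioc_union_Ioi_eq_Ioi zero_le_one).symm
  have hintall : IntegrableOn (fun s => μ s * ‖J φ s‖ ^ 2) (Set.Ioi 0) := by
    rw [hsplit]; exact hint1.union hint2
  refine ⟨hintall, ?_⟩
  have hIsplit : ∫ s in Set.Ioi (0:ℝ), μ s * ‖J φ s‖ ^ 2
      = (∫ s in Set.Ioc (0:ℝ) 1, μ s * ‖J φ s‖ ^ 2)
        + ∫ s in Set.Ioi (1:ℝ), μ s * ‖J φ s‖ ^ 2 := by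
    rw [hsplit]
    exact setIntegral_union (Set.Ioc_disjoint_Ioi le_rfl) measurableSet_Ioi hint1 hint2
  have hI1 : ∫ s in Set.Ioc (0:ℝ) 1, μ s * ‖J φ s‖ ^ 2
      ≤ (∫ s in Set.Ioc (0:ℝ) 1, μ s) * (Real.exp γ * Φ) := by
    have h1 : ∫ s in Set.Ioc (0:ℝ) 1, μ s * ‖J φ s‖ ^ 2
        ≤ ∫ s in Set.Ioc (0:ℝ) 1, μ s * (Real.exp γ * Φ) :=
      setIntegral_mono_on hint1 ((hμint.mono_set hsub01).mul_const _)
        measurableSet_Ioc hbound01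
    rwa [integral_mul_const] at h1
  have hI2 : ∫ s in Set.Ioi (1:ℝ), μ s * ‖J φ s‖ ^ 2
      ≤ (μ 1 * Real.exp δ * Φ) * α⁻¹ ^ 2 := by
    have h1 : ∫ s in Set.Ioi (1:ℝ), μ s * ‖J φ s‖ ^ 2
        ≤ ∫ s in Set.Ioi (1:ℝ), (μ 1 * Real.exp δ * Φ) * (s * Real.exp (-(α * s))) :=
      setIntegral_mono_on hint2 (hexpint.const_mul _) measurableSet_Ioi hbound1
    rw [integral_const_mul] at h1
    refine h1.trans ?_
    exact mul_le_mul_of_nonneg_left hexpval (by positivity)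
  rw [hIsplit]
  have hfinal : (∫ s in Set.Ioc (0:ℝ) 1, μ s) * (Real.exp γ * Φ)
      + (μ 1 * Real.exp δ * Φ) * α⁻¹ ^ 2
      = (Real.exp γ * (∫ s in Set.Ioc (0:ℝ) 1, μ s) + μ 1 * Real.exp δ * (δ - γ)⁻¹ ^ 2) * Φ := by
    rw [hαdef]; ring
  linarith [hI1, hI2]
end

section
/- Let δ > γ > 0 and μ : (0,∞) → [0,∞) satisfy μ(s) ≤ μ(t)e^{-δ(s-t)} for 0 < t < s, with k(t) = ∫_t^∞ μ(s)ds ≤ M₁ for all t ≥ 0. Then for every t > 0 and every φ with ‖φ‖²_{L²_V} = ∫_{-∞}^0 e^{γs}‖φ(s)‖² ds < ∞, one has ∫_{-∞}^0 k(t-s)‖φ(s)‖ ds ≤ M₁^{1/2} μ(t)^{1/2} ‖φ‖_{L²_V} / (δ^{1/2}(δ-γ)^{1/2}). -/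
open Real MeasureTheory Set

lemma helper_exp_int_Ioi {c : ℝ} (hc : 0 < c) (a : ℝ) :
    ∫ r in Set.Ioi a, Real.exp (-c * r) = Real.exp (-c * a) / c := by
  have h := integral_comp_mul_left_Ioi (fun y => Real.exp (-y)) a hc
  simp only [neg_mul, smul_eq_mul] at h ⊢
  rw [show (fun r : ℝ => Real.exp (-(c * r))) = (fun r : ℝ => (fun y => Real.exp (-y)) (c * r)) from rfl] at *
  rw [h, integral_exp_neg_Ioi]
  field_simp

lemma helper_exp_int_Iic {c : ℝ} (hc : 0 < c) :
    IntegrableOn (fun s : ℝ => Real.exp (c * s)) (Set.Iic (0:ℝ)) := by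
  have h1 : IntegrableOn (fun x : ℝ => Real.exp (-c * x)) (Set.Ioi (0:ℝ)) :=
    exp_neg_integrableOn_Ioi 0 hc
  have h2 := (MeasurePreserving.integrableOn_comp_preimage
      (Measure.measurePreserving_neg (volume : Measure ℝ))
      (Homeomorph.neg ℝ).measurableEmbedding).2 h1
  have h3 : IntegrableOn (fun s : ℝ => Real.exp (c * s)) (Set.Iio (0:ℝ)) := by
    have hpre : (fun x : ℝ => -x) ⁻¹' Set.Ioi (0:ℝ) = Set.Iio 0 := by ext x; simp
    rw [hpre] at h2
    refine h2.congr_fun (fun x _ => ?_) measurableSet_Iio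
    simp [Function.comp, mul_neg, neg_neg]
  exact (integrableOn_Iic_iff_integrableOn_Iio).2 h3

lemma helper_exp_integral_Iic {c : ℝ} (hc : 0 < c) :
    ∫ s in Set.Iic (0:ℝ), Real.exp (c * s) = 1 / c := by
  have h := integral_comp_neg_Iic (0:ℝ) (fun x => Real.exp (-c * x))
  simp only [neg_mul, mul_neg, neg_neg, neg_zero] at h
  have := helper_exp_int_Ioi hc 0
  simp only [neg_mul, mul_zero, neg_zero, Real.exp_zero] at this
  calc ∫ s in Set.Iic (0:ℝ), Real.exp (c * s) = ∫ x in Set.Ioi (0:ℝ), Real.exp (-(c * x)) := by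
        rw [← h]
      _ = 1 / c := this

theorem stmt_15 {V : Type*} [NormedAddCommGroup V] [NormedSpace ℝ V]
    (δ γ M₁ : ℝ) (hγ : 0 < γ) (hγδ : γ < δ)
    (μ : ℝ → ℝ) (hμpos : ∀ s > (0:ℝ), 0 ≤ μ s)
    (hμdecay : ∀ t s : ℝ, 0 < t → t < s → μ s ≤ μ t * Real.exp (-δ * (s - t)))
    (hμint : IntegrableOn μ (Set.Ioi 0))
    (k : ℝ → ℝ) (hk : ∀ t, k t = ∫ s in Set.Ioi t, μ s)
    (hkbdd : ∀ t ≥ (0:ℝ), k t ≤ M₁)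
    (φ : ℝ → V) (hφmeas : AEStronglyMeasurable φ (volume.restrict (Set.Iic 0)))
    (hφ : IntegrableOn (fun s => Real.exp (γ * s) * ‖φ s‖ ^ 2) (Set.Iic 0)) :
    ∀ t > (0:ℝ),
      ∫ s in Set.Iic (0:ℝ), k (t - s) * ‖φ s‖ ≤
        Real.sqrt M₁ * Real.sqrt (μ t) *
          Real.sqrt (∫ s in Set.Iic (0:ℝ), Real.exp (γ * s) * ‖φ s‖ ^ 2) /
            (Real.sqrt δ * Real.sqrt (δ - γ)) := by
  intro t ht
  have hδ0 : 0 < δ := hγ.trans hγδ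
  have hδγ : 0 < δ - γ := sub_pos.2 hγδ
  set I : ℝ := ∫ s in Set.Iic (0:ℝ), Real.exp (γ * s) * ‖φ s‖ ^ 2 with hIdef
  have hI0 : 0 ≤ I :=
    setIntegral_nonneg measurableSet_Iic (fun s _ => by positivity)
  have hμt0 : 0 ≤ μ t := hμpos t ht
  -- k is nonnegative on positive arguments
  have hknn : ∀ a : ℝ, 0 < a → 0 ≤ k a := by
    intro a ha
    rw [hk]
    exact setIntegral_nonneg measurableSet_Ioi (fun r hr => hμpos r (ha.trans hr))
  have hM0 : 0 ≤ M₁ := le_trans (hknn 1 one_pos) (hkbdd 1 (by norm_num))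
  -- k is antitone on positive arguments
  have hkmono : ∀ a b : ℝ, 0 < a → a ≤ b → k b ≤ k a := by
    intro a b ha hab
    rw [hk a, hk b]
    have hsub : Set.Ioi a ⊆ Set.Ioi (0:ℝ) := Set.Ioi_subset_Ioi ha.le
    have h1 : IntegrableOn μ (Set.Ioi a) := hμint.mono_set hsub
    have hun : Set.Ioc a b ∪ Set.Ioi b = Set.Ioi a := Set.Ioc_union_Ioi_eq_Ioi hab
    have h2 : IntegrableOn μ (Set.Ioc a b) :=
      h1.mono_set (hun ▸ Set.subset_union_left)
    have h3 : IntegrableOn μ (Set.Ioi b) :=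
      h1.mono_set (hun ▸ Set.subset_union_right)
    have hdisj : Disjoint (Set.Ioc a b) (Set.Ioi b) := Set.Ioc_disjoint_Ioi le_rfl
    have := setIntegral_union hdisj measurableSet_Ioi h2 h3
    rw [hun] at this
    rw [this]
    have : 0 ≤ ∫ s in Set.Ioc a b, μ s :=
      setIntegral_nonneg measurableSet_Ioc (fun r hr => hμpos r (ha.trans hr.1))
    linarith
  -- key pointwise estimate
  have hkey : ∀ s : ℝ, s ≤ 0 → k (t - s) ≤ μ t * Real.exp (δ * s) / δ := by
    intro s hs
    have hts : 0 < t - s := by linarith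
    rw [hk]
    have hint1 : IntegrableOn μ (Set.Ioi (t - s)) :=
      hμint.mono_set (Set.Ioi_subset_Ioi hts.le)
    have hint2 : IntegrableOn (fun r : ℝ => μ t * Real.exp (δ * t) * Real.exp (-δ * r))
        (Set.Ioi (t - s)) :=
      (exp_neg_integrableOn_Ioi (t - s) hδ0).const_mul _
    have hmono : ∀ r ∈ Set.Ioi (t - s), μ r ≤ μ t * Real.exp (δ * t) * Real.exp (-δ * r) := by
      intro r hr
      have hr' : t < r := lt_of_le_of_lt (by linarith : t ≤ t - s) hr
      calc μ r ≤ μ t * Real.exp (-δ * (r - t)) := hμdecay t r ht hr'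
        _ = μ t * Real.exp (δ * t) * Real.exp (-δ * r) := by
            rw [mul_assoc, ← Real.exp_add]; ring_nf
    calc (∫ r in Set.Ioi (t - s), μ r)
        ≤ ∫ r in Set.Ioi (t - s), μ t * Real.exp (δ * t) * Real.exp (-δ * r) :=
          setIntegral_mono_on hint1 hint2 measurableSet_Ioi hmono
      _ = μ t * Real.exp (δ * t) * (Real.exp (-δ * (t - s)) / δ) := by
          rw [integral_const_mul, helper_exp_int_Ioi hδ0]
      _ = μ t * Real.exp (δ * s) / δ := by
          rw [mul_assoc, ← mul_div_assoc, ← Real.exp_add]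
          ring_nf
  -- measurability of s ↦ k (t - s) on Iic 0
  have hgmono : Monotone (fun s : ℝ => k (t - min s 0)) := by
    intro s₁ s₂ h
    exact hkmono _ _ (by have := min_le_right s₂ 0; linarith)
      (by have := min_le_min_right (0:ℝ) h; simpa using by linarith [min_le_min_right (0:ℝ) h])
  have hgmeas : Measurable (fun s : ℝ => k (t - min s 0)) := hgmono.measurable
  have hgeq : (fun s : ℝ => k (t - min s 0)) =ᵐ[volume.restrict (Set.Iic (0:ℝ))]
      (fun s => k (t - s)) := by
    filter_upwards [ae_restrict_mem measurableSet_Iic] with s hs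
    rw [min_eq_left hs]
  have hkam : AEMeasurable (fun s : ℝ => k (t - s)) (volume.restrict (Set.Iic (0:ℝ))) :=
    hgmeas.aemeasurable.congr hgeq
  have hnam : AEMeasurable (fun s : ℝ => ‖φ s‖) (volume.restrict (Set.Iic (0:ℝ))) :=
    hφmeas.norm.aemeasurable
  -- nonnegativity a.e.
  have hfae : 0 ≤ᵐ[volume.restrict (Set.Iic (0:ℝ))] fun s => k (t - s) * ‖φ s‖ := by
    filter_upwards [ae_restrict_mem measurableSet_Iic] with s hs
    exact mul_nonneg (hknn _ (by simp at hs; linarith)) (norm_nonneg _)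
  have hfm : AEStronglyMeasurable (fun s => k (t - s) * ‖φ s‖)
      (volume.restrict (Set.Iic (0:ℝ))) :=
    (hkam.mul hnam).aestronglyMeasurable
  -- define the Hölder factors
  set u : ℝ → ENNReal := fun s =>
    ENNReal.ofReal (Real.sqrt (k (t - s)) * Real.exp (-(γ/2) * s)) with hudef
  set v : ℝ → ENNReal := fun s =>
    ENNReal.ofReal (Real.sqrt (k (t - s)) * Real.exp ((γ/2) * s) * ‖φ s‖) with hvdef
  have hum : AEMeasurable u (volume.restrict (Set.Iic (0:ℝ))) := by
    exact ENNReal.measurable_ofReal.comp_aemeasurable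
      ((Real.continuous_sqrt.measurable.comp_aemeasurable hkam).mul (Real.measurable_exp.comp (measurable_id.const_mul _)).aemeasurable)
  have hvm : AEMeasurable v (volume.restrict (Set.Iic (0:ℝ))) := by
    exact ENNReal.measurable_ofReal.comp_aemeasurable
      (((Real.continuous_sqrt.measurable.comp_aemeasurable hkam).mul
        (Real.measurable_exp.comp (measurable_id.const_mul _)).aemeasurable).mul hnam)
  -- bound on ∫⁻ u^2
  have hA : (∫⁻ s in Set.Iic (0:ℝ), u s ^ (2:ℝ)) ≤
      ENNReal.ofReal (μ t / (δ * (δ - γ))) := by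
    have hpt : ∀ᵐ s ∂(volume.restrict (Set.Iic (0:ℝ))),
        u s ^ (2:ℝ) ≤ ENNReal.ofReal (μ t / δ * Real.exp ((δ - γ) * s)) := by
      filter_upwards [ae_restrict_mem measurableSet_Iic] with s hs
      simp only [Set.mem_Iic] at hs
      have hk0 : 0 ≤ k (t - s) := hknn _ (by linarith)
      rw [hudef]
      rw [ENNReal.ofReal_rpow_of_nonneg (by positivity) (by norm_num)]
      apply ENNReal.ofReal_le_ofReal
      have h2 : (Real.sqrt (k (t - s)) * Real.exp (-(γ/2) * s)) ^ (2:ℝ)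
          = k (t - s) * Real.exp (-γ * s) := by
        rw [show ((2:ℝ) = ((2:ℕ):ℝ)) from by norm_num, Real.rpow_natCast]
        rw [mul_pow, Real.sq_sqrt hk0, ← Real.exp_nat_mul]
        ring_nf
      rw [h2]
      calc k (t - s) * Real.exp (-γ * s)
          ≤ μ t * Real.exp (δ * s) / δ * Real.exp (-γ * s) :=
            mul_le_mul_of_nonneg_right (hkey s hs) (Real.exp_nonneg _)
        _ = μ t / δ * Real.exp ((δ - γ) * s) := by
            rw [div_mul_eq_mul_div, mul_assoc, ← Real.exp_add, div_mul_eq_mul_div, mul_div_assoc]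
            ring_nf
    calc (∫⁻ s in Set.Iic (0:ℝ), u s ^ (2:ℝ))
        ≤ ∫⁻ s in Set.Iic (0:ℝ), ENNReal.ofReal (μ t / δ * Real.exp ((δ - γ) * s)) :=
          lintegral_mono_ae hpt
      _ = ENNReal.ofReal (∫ s in Set.Iic (0:ℝ), μ t / δ * Real.exp ((δ - γ) * s)) := by
          rw [ofReal_integral_eq_lintegral_ofReal
            ((helper_exp_int_Iic hδγ).const_mul _)
            (Filter.Eventually.of_forall fun s => by positivity)]
      _ = ENNReal.ofReal (μ t / (δ * (δ - γ))) := by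
          rw [integral_const_mul, helper_exp_integral_Iic hδγ]
          congr 1
          field_simp
  -- bound on ∫⁻ v^2
  have hB : (∫⁻ s in Set.Iic (0:ℝ), v s ^ (2:ℝ)) ≤ ENNReal.ofReal (M₁ * I) := by
    have hpt : ∀ᵐ s ∂(volume.restrict (Set.Iic (0:ℝ))),
        v s ^ (2:ℝ) ≤ ENNReal.ofReal (M₁ * (Real.exp (γ * s) * ‖φ s‖ ^ 2)) := by
      filter_upwards [ae_restrict_mem measurableSet_Iic] with s hs
      simp only [Set.mem_Iic] at hs
      have hk0 : 0 ≤ k (t - s) := hknn _ (by linarith)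
      rw [hvdef]
      rw [ENNReal.ofReal_rpow_of_nonneg (by positivity) (by norm_num)]
      apply ENNReal.ofReal_le_ofReal
      have h2 : (Real.sqrt (k (t - s)) * Real.exp ((γ/2) * s) * ‖φ s‖) ^ (2:ℝ)
          = k (t - s) * (Real.exp (γ * s) * ‖φ s‖ ^ 2) := by
        rw [show ((2:ℝ) = ((2:ℕ):ℝ)) from by norm_num, Real.rpow_natCast]
        rw [mul_pow, mul_pow, Real.sq_sqrt hk0, ← Real.exp_nat_mul]
        ring_nf
      rw [h2]
      exact mul_le_mul_of_nonneg_right (hkbdd _ (by linarith)) (by positivity)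
    calc (∫⁻ s in Set.Iic (0:ℝ), v s ^ (2:ℝ))
        ≤ ∫⁻ s in Set.Iic (0:ℝ), ENNReal.ofReal (M₁ * (Real.exp (γ * s) * ‖φ s‖ ^ 2)) :=
          lintegral_mono_ae hpt
      _ = ENNReal.ofReal (∫ s in Set.Iic (0:ℝ), M₁ * (Real.exp (γ * s) * ‖φ s‖ ^ 2)) := by
          rw [ofReal_integral_eq_lintegral_ofReal (hφ.const_mul _)
            (Filter.Eventually.of_forall fun s => by positivity)]
      _ = ENNReal.ofReal (M₁ * I) := by rw [integral_const_mul]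
  -- the main inequality via Cauchy–Schwarz
  have hmain : ∫ s in Set.Iic (0:ℝ), k (t - s) * ‖φ s‖ ≤
      Real.sqrt (μ t / (δ * (δ - γ))) * Real.sqrt (M₁ * I) := by
    rw [integral_eq_lintegral_of_nonneg_ae hfae hfm]
    apply ENNReal.toReal_le_of_le_ofReal (by positivity)
    have hsplit : (∫⁻ s in Set.Iic (0:ℝ), ENNReal.ofReal (k (t - s) * ‖φ s‖)) =
        ∫⁻ s in Set.Iic (0:ℝ), (u * v) s := by
      apply lintegral_congr_ae
      filter_upwards [ae_restrict_mem measurableSet_Iic] with s hs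
      simp only [Set.mem_Iic] at hs
      have hk0 : 0 ≤ k (t - s) := hknn _ (by linarith)
      simp only [Pi.mul_apply, hudef, hvdef]
      rw [← ENNReal.ofReal_mul (by positivity)]
      congr 1
      have he : Real.exp (-(γ/2) * s) * Real.exp ((γ/2) * s) = 1 := by
        rw [← Real.exp_add, show -(γ/2) * s + (γ/2) * s = 0 by ring, Real.exp_zero]
      have hks : Real.sqrt (k (t - s)) * Real.sqrt (k (t - s)) = k (t - s) :=
        Real.mul_self_sqrt hk0
      calc k (t - s) * ‖φ s‖
          = (Real.sqrt (k (t - s)) * Real.sqrt (k (t - s)))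
            * (Real.exp (-(γ/2) * s) * Real.exp ((γ/2) * s)) * ‖φ s‖ := by
            rw [hks, he]; ring
        _ = Real.sqrt (k (t - s)) * Real.exp (-(γ/2) * s)
            * (Real.sqrt (k (t - s)) * Real.exp ((γ/2) * s) * ‖φ s‖) := by ring
    rw [hsplit]
    have hconj : Real.HolderConjugate 2 2 := Real.holderConjugate_iff.mpr ⟨one_lt_two, by norm_num⟩
    calc (∫⁻ s in Set.Iic (0:ℝ), (u * v) s)
        ≤ (∫⁻ s in Set.Iic (0:ℝ), u s ^ (2:ℝ)) ^ (1/(2:ℝ)) *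
          (∫⁻ s in Set.Iic (0:ℝ), v s ^ (2:ℝ)) ^ (1/(2:ℝ)) :=
          ENNReal.lintegral_mul_le_Lp_mul_Lq _ hconj hum hvm
      _ ≤ (ENNReal.ofReal (μ t / (δ * (δ - γ)))) ^ (1/(2:ℝ)) *
          (ENNReal.ofReal (M₁ * I)) ^ (1/(2:ℝ)) := by
          exact mul_le_mul' (ENNReal.rpow_le_rpow hA (by norm_num))
            (ENNReal.rpow_le_rpow hB (by norm_num))
      _ = ENNReal.ofReal (Real.sqrt (μ t / (δ * (δ - γ))) * Real.sqrt (M₁ * I)) := by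
          rw [ENNReal.ofReal_rpow_of_nonneg (by positivity) (by norm_num),
            ENNReal.ofReal_rpow_of_nonneg (by positivity) (by norm_num),
            ← ENNReal.ofReal_mul (by positivity), ← Real.sqrt_eq_rpow, ← Real.sqrt_eq_rpow]
  -- final arithmetic
  refine hmain.trans (le_of_eq ?_)
  rw [Real.sqrt_div hμt0, Real.sqrt_mul (le_of_lt hδ0), Real.sqrt_mul hM0]
  ring
end

section
/- Let a : ℝ → ℝ be locally Lipschitz with Lipschitz constant L on [-R,R] and a(r) ≥ m > 0, l a bounded linear functional on L²(Ω) with norm |l|. Then for u, v ∈ H¹₀(Ω) with |l(u)|, |l(v)| ≤ R and any α > 0: -2∫_Ω (a(l(u))∇u - a(l(v))∇v)·∇(u-v) dx ≤ (α - 2m)‖u-v‖² + (L²|l|²/α)|u-v|²‖v‖², where ‖·‖ is the H¹₀ seminorm and |·| the L² norm. -/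
theorem stmt_19 {V H : Type*} [NormedAddCommGroup V] [InnerProductSpace ℝ V]
    [NormedAddCommGroup H] [InnerProductSpace ℝ H]
    (m L R α : ℝ) (hm : 0 < m) (hR : 0 < R) (hα : 0 < α)
    (a : ℝ → ℝ) (ha : ∀ r, m ≤ a r)
    (hLip : ∀ x ∈ Set.Icc (-R) R, ∀ y ∈ Set.Icc (-R) R, |a x - a y| ≤ L * |x - y|)
    (e : V →ₗ[ℝ] H) (l : H →L[ℝ] ℝ)
    (u v : V) (hu : |l (e u)| ≤ R) (hv : |l (e v)| ≤ R) :
    -2 * (a (l (e u)) * (inner ℝ u (u - v) : ℝ) - a (l (e v)) * (inner ℝ v (u - v) : ℝ)) ≤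
      (α - 2 * m) * ‖u - v‖ ^ 2 + (L ^ 2 * ‖l‖ ^ 2 / α) * ‖e (u - v)‖ ^ 2 * ‖v‖ ^ 2 := by
  set A := a (l (e u)) with hAdef
  set B := a (l (e v)) with hBdef
  have hA : m ≤ A := ha _
  have hmemu : l (e u) ∈ Set.Icc (-R) R := abs_le.mp hu
  have hmemv : l (e v) ∈ Set.Icc (-R) R := abs_le.mp hv
  -- L is nonnegative
  have hL0 : 0 ≤ L := by
    have h := hLip R ⟨by linarith, le_refl R⟩ (-R) ⟨le_refl _, by linarith⟩
    have h2 : |(R : ℝ) - (-R)| = 2 * R := by rw [abs_of_nonneg]; ring; linarith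
    nlinarith [abs_nonneg (a R - a (-R))]
  have hiv : |(inner ℝ v (u - v) : ℝ)| ≤ ‖v‖ * ‖u - v‖ := abs_real_inner_le_norm v (u - v)
  -- Lipschitz bound
  have habs : |A - B| ≤ L * ‖l‖ * ‖e (u - v)‖ := by
    have h1 : |A - B| ≤ L * |l (e u) - l (e v)| := hLip _ hmemu _ hmemv
    have h2 : l (e u) - l (e v) = l (e (u - v)) := by
      rw [map_sub e, map_sub l]
    have h3 : |l (e (u - v))| ≤ ‖l‖ * ‖e (u - v)‖ := l.le_opNorm _
    calc |A - B| ≤ L * |l (e u) - l (e v)| := h1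
      _ = L * |l (e (u - v))| := by rw [h2]
      _ ≤ L * (‖l‖ * ‖e (u - v)‖) := by
          exact mul_le_mul_of_nonneg_left h3 hL0
      _ = L * ‖l‖ * ‖e (u - v)‖ := by ring
  -- decomposition
  have hdecomp : (inner ℝ u (u - v) : ℝ) = ‖u - v‖ ^ 2 + (inner ℝ v (u - v) : ℝ) := by
    have : (inner ℝ u (u - v) : ℝ) = (inner ℝ (u - v) (u - v) : ℝ) + (inner ℝ v (u - v) : ℝ) := by
      rw [← inner_add_left]; congr 1; abel
    rw [this, real_inner_self_eq_norm_sq]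
  set N := ‖u - v‖ with hN
  set ivv := (inner ℝ v (u - v) : ℝ) with hivv
  have hN0 : 0 ≤ N := norm_nonneg _
  -- key bound on cross term
  have h1 : -((A - B) * ivv) ≤ |A - B| * |ivv| := by
    calc -((A - B) * ivv) ≤ |(A - B) * ivv| := neg_le_abs _
      _ = |A - B| * |ivv| := abs_mul _ _
  have h2 : |A - B| * |ivv| ≤ (L * ‖l‖ * ‖e (u - v)‖) * (‖v‖ * N) :=
    mul_le_mul habs hiv (abs_nonneg _)
      (by positivity)
  -- Young's inequality
  have hyoung : 2 * ((L * ‖l‖ * ‖e (u - v)‖) * (‖v‖ * N)) ≤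
      α * N ^ 2 + (L ^ 2 * ‖l‖ ^ 2 / α) * ‖e (u - v)‖ ^ 2 * ‖v‖ ^ 2 := by
    set Y := L * ‖l‖ * ‖e (u - v)‖ * ‖v‖ with hY
    have hrw : (L ^ 2 * ‖l‖ ^ 2 / α) * ‖e (u - v)‖ ^ 2 * ‖v‖ ^ 2 = Y ^ 2 / α := by
      field_simp [hY]; ring
    rw [hrw]
    have key : 2 * Y * N - α * N ^ 2 ≤ Y ^ 2 / α := by
      rw [le_div_iff₀ hα]
      nlinarith [sq_nonneg (Y - α * N)]
    nlinarith [key]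
  nlinarith [hdecomp, h1, h2, hyoung, sq_nonneg N, hA, mul_le_mul_of_nonneg_right hA (sq_nonneg N)]
end
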